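/- Hölder inequality for variable exponent sequence spaces: let p : ℕ → [1,∞] and define the pointwise conjugate p* : ℕ → [1,∞] by 1/p(n) + 1/p*(n) = 1 for each n. Then for any real sequences (x_n) and (y_n), ∑_{n=1}^∞ |x_n y_n| ≤ Φ_p((x_n)) · Φ_{p*}((y_n)). -/

import Mathlib

open scoped ENNReal

/-- `t ⊞_p s`: for `p < ∞`, `(t^p + s^p)^(1/p)`; for `p = ∞`, `max t s`. -/
noncomputable def boxPlus (p : ℝ≥0∞) (t s : ℝ) : ℝ :=
  if p = ∞ then max t s else (t ^ p.toReal + s ^ p.toReal) ^ (1 / p.toReal)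

/-- The recursively defined seminorms `|||x|||_(k)` (0-indexed). -/
noncomputable def seqNorm (p : ℕ → ℝ≥0∞) (x : ℕ → ℝ) : ℕ → ℝ
  | 0 => boxPlus (p 0) |x 0| |x 1|
  | k + 1 => boxPlus (p (k + 1)) (seqNorm p x k) |x (k + 2)|

/-- `Φ_p(x) = lim_k |||x|||_(k)`, as the supremum of the nondecreasing sequence. -/
noncomputable def Phi (p : ℕ → ℝ≥0∞) (x : ℕ → ℝ) : ℝ≥0∞ :=
  ⨆ k, ENNReal.ofReal (seqNorm p x k)

/-- `x` is a bounded real sequence, i.e. `x ∈ ℓ^∞`. -/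
def IsBddSeq (x : ℕ → ℝ) : Prop := ∃ M : ℝ, ∀ n, |x n| ≤ M

/-- Membership in the variable exponent space `ℓ^{p(·)}`. -/
def MemVLp (p : ℕ → ℝ≥0∞) (x : ℕ → ℝ) : Prop := IsBddSeq x ∧ Phi p x < ⊤

lemma boxPlus_nonneg {p : ℝ≥0∞} {t s : ℝ} (ht : 0 ≤ t) (hs : 0 ≤ s) :
    0 ≤ boxPlus p t s := by
  unfold boxPlus
  split
  · exact le_max_of_le_left ht
  · exact Real.rpow_nonneg (by positivity) _

/-- Two-term Hölder inequality for `boxPlus`. -/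
lemma holder2 {P Q : ℝ≥0∞} (hP : 1 ≤ P) (hc : 1 / P + 1 / Q = 1)
    {a b c d : ℝ} (ha : 0 ≤ a) (hb : 0 ≤ b) (hc' : 0 ≤ c) (hd : 0 ≤ d) :
    a * b + c * d ≤ boxPlus P a c * boxPlus Q b d := by
  simp only [one_div] at hc
  by_cases hPt : P = ∞
  · have hQ : Q = 1 := by
      rw [hPt] at hc
      simp at hc
      simpa using congrArg (·⁻¹) hc
    rw [hPt, hQ]
    simp only [boxPlus, if_pos rfl, ENNReal.one_ne_top, if_neg, ENNReal.toReal_one,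
      Real.rpow_one, one_div_one]
    calc a * b + c * d ≤ max a c * b + max a c * d := by
          gcongr <;> [exact le_max_left a c; exact le_max_right a c]
      _ = max a c * (b + d) := by ring
  by_cases hQt : Q = ∞
  · have hPe : P = 1 := by
      rw [hQt] at hc
      simp at hc
      simpa using congrArg (·⁻¹) hc
    rw [hPe, hQt]
    simp only [boxPlus, if_pos rfl, ENNReal.one_ne_top, if_neg, ENNReal.toReal_one,
      Real.rpow_one, one_div_one]
    calc a * b + c * d ≤ a * max b d + c * max b d := by
          gcongr <;> [exact le_max_left b d; exact le_max_right b d]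
      _ = (a + c) * max b d := by ring
  · -- both finite
    have hQ0 : Q ≠ 0 := by
      rintro rfl
      simp at hc
    have hP0 : P ≠ 0 := (zero_lt_one.trans_le hP).ne'
    have hPlt : 1 < P := by
      rcases hP.lt_or_eq with h | h
      · exact h
      · exfalso
        rw [← h] at hc
        simp only [inv_one] at hc
        have h0 : Q⁻¹ = 0 := (ENNReal.add_right_inj (a := 1) (by simp)).mp (by simpa using hc)
        exact hQt (ENNReal.inv_eq_zero.mp h0)
    have hconjR : (P.toReal).HolderConjugate Q.toReal := by
      constructor
      · have := congrArg ENNReal.toReal hc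
        rw [ENNReal.toReal_add (by simp [hP0, hPt]) (by simp [hQ0, hQt])] at this
        simpa [ENNReal.toReal_inv] using this
      · exact ENNReal.toReal_pos hP0 hPt
      · exact ENNReal.toReal_pos hQ0 hQt
    have key := Real.inner_le_Lp_mul_Lq_of_nonneg (Finset.univ : Finset (Fin 2))
      (f := ![a, c]) (g := ![b, d]) hconjR
      (by intro i _; fin_cases i <;> simpa) (by intro i _; fin_cases i <;> simpa)
    simpa [Fin.sum_univ_two, boxPlus, hPt, hQt] using key

lemma seqNorm_nonneg (p : ℕ → ℝ≥0∞) (x : ℕ → ℝ) : ∀ k, 0 ≤ seqNorm p x k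
  | 0 => boxPlus_nonneg (abs_nonneg _) (abs_nonneg _)
  | k + 1 => boxPlus_nonneg (seqNorm_nonneg p x k) (abs_nonneg _)

lemma sum_le_seqNorm_mul (p pStar : ℕ → ℝ≥0∞) (hp : ∀ n, 1 ≤ p n)
    (hconj : ∀ n, 1 / p n + 1 / pStar n = 1) (x y : ℕ → ℝ) :
    ∀ k, ∑ n ∈ Finset.range (k + 2), |x n * y n| ≤ seqNorm p x k * seqNorm pStar y k := by
  intro k
  induction k with
  | zero =>
      rw [show (0:ℕ)+2 = 2 from rfl, Finset.sum_range_succ, Finset.sum_range_one,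
        abs_mul, abs_mul]
      simp only [seqNorm]
      exact holder2 (hp 0) (hconj 0) (abs_nonneg _) (abs_nonneg _) (abs_nonneg _) (abs_nonneg _)
  | succ k ih =>
      rw [Finset.sum_range_succ]
      calc ∑ n ∈ Finset.range (k + 2), |x n * y n| + |x (k + 2) * y (k + 2)|
          ≤ seqNorm p x k * seqNorm pStar y k + |x (k + 2)| * |y (k + 2)| := by
            rw [abs_mul]; gcongr
        _ ≤ seqNorm p x (k + 1) * seqNorm pStar y (k + 1) :=
            holder2 (hp (k + 1)) (hconj (k + 1)) (seqNorm_nonneg p x k)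
              (seqNorm_nonneg pStar y k) (abs_nonneg _) (abs_nonneg _)

theorem holder_inequality (p pStar : ℕ → ℝ≥0∞) (hp : ∀ n, 1 ≤ p n)
    (hconj : ∀ n, 1 / p n + 1 / pStar n = 1) (x y : ℕ → ℝ) :
    ∑' n, ENNReal.ofReal |x n * y n| ≤ Phi p x * Phi pStar y := by
  refine Summable.tsum_le_of_sum_le ENNReal.summable fun s => ?_
  obtain ⟨n, hn⟩ := s.exists_nat_subset_range
  calc ∑ i ∈ s, ENNReal.ofReal |x i * y i|
      ≤ ∑ i ∈ Finset.range (n + 2), ENNReal.ofReal |x i * y i| :=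
        Finset.sum_le_sum_of_subset (hn.trans (Finset.range_subset_range.mpr (by omega)))
    _ = ENNReal.ofReal (∑ i ∈ Finset.range (n + 2), |x i * y i|) :=
        (ENNReal.ofReal_sum_of_nonneg fun i _ => abs_nonneg _).symm
    _ ≤ ENNReal.ofReal (seqNorm p x n * seqNorm pStar y n) :=
        ENNReal.ofReal_le_ofReal (sum_le_seqNorm_mul p pStar hp hconj x y n)
    _ = ENNReal.ofReal (seqNorm p x n) * ENNReal.ofReal (seqNorm pStar y n) :=
        ENNReal.ofReal_mul (seqNorm_nonneg p x n)
    _ ≤ Phi p x * Phi pStar y :=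
        mul_le_mul' (le_iSup (fun k => ENNReal.ofReal (seqNorm p x k)) n)
          (le_iSup (fun k => ENNReal.ofReal (seqNorm pStar y k)) n)
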